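/- ∫_0^∞ r·cosh(π r/3)/cosh(π r) dr = 27·L(2,χ_{-3})/(8π²), where L(2,χ_{-3}) = Σ_{n≥1} χ_{-3}(n)/n² and χ_{-3} is the quadratic character mod 3. -/

import Mathlib

open Real MeasureTheory

/-- The quadratic character mod 3 as a function on ℕ. -/
noncomputable def chiMinus3 (n : ℕ) : ℝ :=
  if n % 3 = 1 then 1 else if n % 3 = 2 then -1 else 0

namespace Stmt4Aux

lemma summable_base : Summable (fun k : ℕ => 1 / ((k : ℝ) + 1) ^ 2) := by
  have h := (summable_one_div_nat_pow (p := 2)).mpr one_lt_two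
  have h2 := (summable_nat_add_iff (f := fun n : ℕ => 1 / (n : ℝ) ^ 2) 1).mpr h
  simpa using h2

lemma summable_aux {c d : ℝ} (hc : 1 ≤ c) (hd : 1 ≤ d) :
    Summable (fun k : ℕ => 1 / (c * k + d) ^ 2) := by
  refine Summable.of_nonneg_of_le (fun k => by positivity) (fun k => ?_) summable_base
  have hk : (k : ℝ) + 1 ≤ c * k + d := by
    have h0 : (0:ℝ) ≤ (k:ℝ) := Nat.cast_nonneg k
    nlinarith
  gcongr

lemma tsum_mod3 (f : ℕ → ℝ) (hf : Summable f) :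
    ∑' n, f n = ∑' q, (f (q * 3) + f (q * 3 + 1) + f (q * 3 + 2)) := by
  have he : Summable (fun p : ℕ × Fin 3 => f ((Nat.divModEquiv 3).symm p)) :=
    ((Nat.divModEquiv 3).symm.summable_iff).mpr hf
  calc ∑' n, f n = ∑' p : ℕ × Fin 3, f ((Nat.divModEquiv 3).symm p) :=
        ((Nat.divModEquiv 3).symm.tsum_eq f).symm
    _ = ∑' q, ∑' j : Fin 3, f ((Nat.divModEquiv 3).symm (q, j)) :=
        Summable.tsum_prod' he (fun b => Summable.of_finite)
    _ = ∑' q, (f (q * 3) + f (q * 3 + 1) + f (q * 3 + 2)) := by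
        refine tsum_congr fun q => ?_
        rw [tsum_fintype, Fin.sum_univ_three]
        simp [Nat.divModEquiv]

lemma tsum_mod2 (f : ℕ → ℝ) (hf : Summable f) :
    ∑' n, f n = ∑' q, (f (q * 2) + f (q * 2 + 1)) := by
  have he : Summable (fun p : ℕ × Fin 2 => f ((Nat.divModEquiv 2).symm p)) :=
    ((Nat.divModEquiv 2).symm.summable_iff).mpr hf
  calc ∑' n, f n = ∑' p : ℕ × Fin 2, f ((Nat.divModEquiv 2).symm p) :=
        ((Nat.divModEquiv 2).symm.tsum_eq f).symm
    _ = ∑' q, ∑' j : Fin 2, f ((Nat.divModEquiv 2).symm (q, j)) :=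
        Summable.tsum_prod' he (fun b => Summable.of_finite)
    _ = ∑' q, (f (q * 2) + f (q * 2 + 1)) := by
        refine tsum_congr fun q => ?_
        rw [tsum_fintype, Fin.sum_univ_two]
        simp [Nat.divModEquiv]

lemma summable_chi : Summable (fun n : ℕ => chiMinus3 n / (n : ℝ) ^ 2) := by
  refine Summable.of_abs ?_
  refine Summable.of_nonneg_of_le (fun k => abs_nonneg _) (fun k => ?_)
    ((summable_one_div_nat_pow (p := 2)).mpr one_lt_two)
  rcases Nat.eq_zero_or_pos k with hk | hk
  · subst hk; simp [chiMinus3]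
  · have h1 : |chiMinus3 k| ≤ 1 := by
      unfold chiMinus3
      split_ifs <;> norm_num
    have h2 : (0:ℝ) < (k:ℝ) ^ 2 := by positivity
    rw [abs_div, abs_pow, Nat.abs_cast]
    rw [div_le_div_iff₀ h2 h2]
    nlinarith

/-- The key sum identity. -/
lemma T_eq_L :
    ∑' n : ℕ, (-1 : ℝ) ^ n * (1 / (3 * (n:ℝ) + 1) ^ 2 + 1 / (3 * (n:ℝ) + 2) ^ 2)
      = (3 / 2) * ∑' n : ℕ, chiMinus3 n / (n : ℝ) ^ 2 := by
  -- summable building blocks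
  have hP : Summable (fun k : ℕ => 1 / (3 * (k:ℝ) + 1) ^ 2) :=
    summable_aux (by norm_num) (by norm_num)
  have hQ : Summable (fun k : ℕ => 1 / (3 * (k:ℝ) + 2) ^ 2) :=
    summable_aux (by norm_num) (by norm_num)
  have hA : Summable (fun k : ℕ => 1 / (6 * (k:ℝ) + 1) ^ 2) :=
    summable_aux (by norm_num) (by norm_num)
  have hB : Summable (fun k : ℕ => 1 / (6 * (k:ℝ) + 2) ^ 2) :=
    summable_aux (by norm_num) (by norm_num)
  have hC : Summable (fun k : ℕ => 1 / (6 * (k:ℝ) + 4) ^ 2) :=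
    summable_aux (by norm_num) (by norm_num)
  have hD : Summable (fun k : ℕ => 1 / (6 * (k:ℝ) + 5) ^ 2) :=
    summable_aux (by norm_num) (by norm_num)
  set P := ∑' k : ℕ, 1 / (3 * (k:ℝ) + 1) ^ 2 with hPdef
  set Q := ∑' k : ℕ, 1 / (3 * (k:ℝ) + 2) ^ 2 with hQdef
  set a := ∑' k : ℕ, 1 / (6 * (k:ℝ) + 1) ^ 2 with hadef
  set b := ∑' k : ℕ, 1 / (6 * (k:ℝ) + 2) ^ 2 with hbdef
  set c := ∑' k : ℕ, 1 / (6 * (k:ℝ) + 4) ^ 2 with hcdef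
  set d := ∑' k : ℕ, 1 / (6 * (k:ℝ) + 5) ^ 2 with hddef
  -- L = P - Q
  have hLsum : Summable (fun n : ℕ => chiMinus3 n / (n : ℝ) ^ 2) := summable_chi
  have hL : ∑' n : ℕ, chiMinus3 n / (n : ℝ) ^ 2 = P - Q := by
    rw [tsum_mod3 _ hLsum]
    have key : ∀ q : ℕ, chiMinus3 (q * 3) / ((q * 3 : ℕ) : ℝ) ^ 2
        + chiMinus3 (q * 3 + 1) / ((q * 3 + 1 : ℕ) : ℝ) ^ 2
        + chiMinus3 (q * 3 + 2) / ((q * 3 + 2 : ℕ) : ℝ) ^ 2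
        = 1 / (3 * (q:ℝ) + 1) ^ 2 - 1 / (3 * (q:ℝ) + 2) ^ 2 := by
      intro q
      have h0 : (q * 3) % 3 = 0 := by omega
      have h1 : (q * 3 + 1) % 3 = 1 := by omega
      have h2 : (q * 3 + 2) % 3 = 2 := by omega
      simp only [chiMinus3, h0, h1, h2]
      norm_num
      push_cast
      ring
    rw [tsum_congr key, Summable.tsum_sub hP hQ]
  have hLmod2 : P - Q = a - b + c - d := by
    have hl : Summable (fun q : ℕ => 1 / (3 * (q:ℝ) + 1) ^ 2 - 1 / (3 * (q:ℝ) + 2) ^ 2) :=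
      hP.sub hQ
    calc P - Q = ∑' q : ℕ, (1 / (3 * (q:ℝ) + 1) ^ 2 - 1 / (3 * (q:ℝ) + 2) ^ 2) :=
          (Summable.tsum_sub hP hQ).symm
      _ = ∑' k : ℕ, ((1 / (3 * ((k * 2 : ℕ):ℝ) + 1) ^ 2 - 1 / (3 * ((k * 2 : ℕ):ℝ) + 2) ^ 2)
            + (1 / (3 * ((k * 2 + 1 : ℕ):ℝ) + 1) ^ 2 - 1 / (3 * ((k * 2 + 1 : ℕ):ℝ) + 2) ^ 2)) :=
          tsum_mod2 _ hl
      _ = ∑' k : ℕ, ((1 / (6 * (k:ℝ) + 1) ^ 2 - 1 / (6 * (k:ℝ) + 2) ^ 2)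
            + (1 / (6 * (k:ℝ) + 4) ^ 2 - 1 / (6 * (k:ℝ) + 5) ^ 2)) := by
          refine tsum_congr fun k => ?_
          push_cast
          ring
      _ = a - b + c - d := by
          rw [Summable.tsum_add (hA.sub hB) (hC.sub hD), Summable.tsum_sub hA hB, Summable.tsum_sub hC hD]
          ring
  have hb' : b = P / 4 := by
    have : ∀ k : ℕ, 1 / (6 * (k:ℝ) + 2) ^ 2 = (1/4) * (1 / (3 * (k:ℝ) + 1) ^ 2) := by
      intro k
      have h : (3 * (k:ℝ) + 1) ≠ 0 := by positivity
      field_simp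
      ring
    rw [hbdef, tsum_congr this, tsum_mul_left, hPdef]
    ring
  have hc' : c = Q / 4 := by
    have : ∀ k : ℕ, 1 / (6 * (k:ℝ) + 4) ^ 2 = (1/4) * (1 / (3 * (k:ℝ) + 2) ^ 2) := by
      intro k
      have h : (3 * (k:ℝ) + 2) ≠ 0 := by positivity
      field_simp
      ring
    rw [hcdef, tsum_congr this, tsum_mul_left, hQdef]
    ring
  have ht : Summable (fun n : ℕ => (-1 : ℝ) ^ n * (1 / (3 * (n:ℝ) + 1) ^ 2 + 1 / (3 * (n:ℝ) + 2) ^ 2)) := by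
    refine Summable.of_abs ?_
    have habs : (fun n : ℕ => |(-1 : ℝ) ^ n * (1 / (3 * (n:ℝ) + 1) ^ 2 + 1 / (3 * (n:ℝ) + 2) ^ 2)|)
        = fun n : ℕ => 1 / (3 * (n:ℝ) + 1) ^ 2 + 1 / (3 * (n:ℝ) + 2) ^ 2 := by
      funext n
      rw [abs_mul, abs_pow, abs_neg, abs_one, one_pow, one_mul, abs_of_nonneg (by positivity)]
    rw [habs]
    exact hP.add hQ
  have hT : ∑' n : ℕ, (-1 : ℝ) ^ n * (1 / (3 * (n:ℝ) + 1) ^ 2 + 1 / (3 * (n:ℝ) + 2) ^ 2)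
      = a + b - c - d := by
    calc ∑' n : ℕ, (-1 : ℝ) ^ n * (1 / (3 * (n:ℝ) + 1) ^ 2 + 1 / (3 * (n:ℝ) + 2) ^ 2)
        = ∑' k : ℕ, ((-1 : ℝ) ^ (k * 2) * (1 / (3 * ((k * 2 : ℕ):ℝ) + 1) ^ 2 + 1 / (3 * ((k * 2 : ℕ):ℝ) + 2) ^ 2)
          + (-1 : ℝ) ^ (k * 2 + 1) * (1 / (3 * ((k * 2 + 1 : ℕ):ℝ) + 1) ^ 2 + 1 / (3 * ((k * 2 + 1 : ℕ):ℝ) + 2) ^ 2)) :=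
          tsum_mod2 _ ht
      _ = ∑' k : ℕ, ((1 / (6 * (k:ℝ) + 1) ^ 2 + 1 / (6 * (k:ℝ) + 2) ^ 2)
            - (1 / (6 * (k:ℝ) + 4) ^ 2 + 1 / (6 * (k:ℝ) + 5) ^ 2)) := by
          refine tsum_congr fun k => ?_
          have e1 : (-1 : ℝ) ^ (k * 2) = 1 := Even.neg_one_pow ⟨k, by ring⟩
          have e2 : (-1 : ℝ) ^ (k * 2 + 1) = -1 := Odd.neg_one_pow ⟨k, by ring⟩
          rw [e1, e2]
          push_cast
          ring
      _ = a + b - c - d := by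
          rw [Summable.tsum_sub (hA.add hB) (hC.add hD), Summable.tsum_add hA hB, Summable.tsum_add hC hD]
          ring
  rw [hL, hT]
  linarith

lemma integral_exp {c : ℝ} (hc : 0 < c) :
    ∫ r in Set.Ioi (0:ℝ), r * Real.exp (-(c * r)) = 1 / c ^ 2 := by
  calc ∫ r in Set.Ioi (0:ℝ), r * Real.exp (-(c * r))
      = ∫ r in Set.Ioi (0:ℝ), r ^ ((2:ℝ) - 1) * Real.exp (-(c * r)) := by
        refine setIntegral_congr_fun measurableSet_Ioi fun r hr => ?_
        rw [show (2:ℝ) - 1 = 1 by norm_num, Real.rpow_one]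
    _ = (1 / c) ^ (2:ℝ) * Real.Gamma 2 := Real.integral_rpow_mul_exp_neg_mul_Ioi two_pos hc
    _ = 1 / c ^ 2 := by
        rw [Real.Gamma_two, mul_one, show ((2:ℝ)) = ((2:ℕ):ℝ) by norm_num,
          Real.rpow_natCast, div_pow, one_pow]

lemma integrable_exp {c : ℝ} (hc : 0 < c) :
    IntegrableOn (fun r : ℝ => r * Real.exp (-(c * r))) (Set.Ioi 0) := by
  have h := integrableOn_rpow_mul_exp_neg_mul_rpow (s := 1) (p := 1) (b := c)
    (by norm_num) zero_lt_one hc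
  simpa [Real.rpow_one, neg_mul] using h

/-- The n-th term of the series expansion. -/
noncomputable def f (n : ℕ) (r : ℝ) : ℝ :=
  (-1:ℝ) ^ n * (r * Real.exp (-((2 * π * (n:ℝ) + 2 * π / 3) * r))
    + r * Real.exp (-((2 * π * (n:ℝ) + 4 * π / 3) * r)))

lemma sum_f {r : ℝ} (hr : 0 < r) :
    ∑' n : ℕ, f n r = r * Real.cosh (π * r / 3) / Real.cosh (π * r) := by
  set u := Real.exp (-(π * r / 3)) with hu
  have hu0 : 0 < u := Real.exp_pos _
  have hu1 : u < 1 := by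
    rw [hu]
    exact Real.exp_lt_one_iff.mpr (neg_lt_zero.mpr (by positivity))
  have hterm : ∀ n : ℕ, f n r = (-(u ^ 6)) ^ n * (r * u ^ 2 + r * u ^ 4) := by
    intro n
    have e1 : Real.exp (-((2 * π * (n:ℝ) + 2 * π / 3) * r)) = u ^ (6 * n + 2) := by
      rw [hu, ← Real.exp_nat_mul]
      congr 1
      push_cast
      ring
    have e2 : Real.exp (-((2 * π * (n:ℝ) + 4 * π / 3) * r)) = u ^ (6 * n + 4) := by
      rw [hu, ← Real.exp_nat_mul]
      congr 1
      push_cast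
      ring
    rw [f, e1, e2, neg_pow, pow_add, pow_add, pow_mul]
    ring
  rw [tsum_congr hterm, tsum_mul_right, tsum_geometric_of_norm_lt_one (by
    rw [norm_neg, Real.norm_eq_abs, abs_of_pos (by positivity)]
    exact pow_lt_one₀ hu0.le hu1 (by norm_num)), sub_neg_eq_add]
  have hx : Real.exp (π * r / 3) = u⁻¹ := by
    rw [hu, ← Real.exp_neg, neg_neg]
  have hcosh1 : Real.cosh (π * r / 3) = (u⁻¹ + u) / 2 := by
    rw [Real.cosh_eq, hx, ← hu]
  have hx3 : Real.exp (π * r) = (u⁻¹) ^ 3 := by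
    rw [hu, ← Real.exp_neg, neg_neg, ← Real.exp_nat_mul]
    congr 1
    push_cast
    ring
  have hx3' : Real.exp (-(π * r)) = u ^ 3 := by
    rw [hu, ← Real.exp_nat_mul]
    congr 1
    push_cast
    ring
  have hcosh2 : Real.cosh (π * r) = ((u⁻¹) ^ 3 + u ^ 3) / 2 := by
    rw [Real.cosh_eq, hx3, hx3']
  rw [hcosh1, hcosh2]
  have h6 : (0:ℝ) < 1 + u ^ 6 := by positivity
  field_simp

end Stmt4Aux

theorem stmt4 :
    (∫ r in Set.Ioi (0:ℝ), r * Real.cosh (π * r / 3) / Real.cosh (π * r)) =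
      27 * (∑' n : ℕ, chiMinus3 n / (n:ℝ)^2) / (8 * π^2) := by
  have hπ : 0 < π := Real.pi_pos
  have hπ3 : (3:ℝ) < π := Real.pi_gt_three
  have hc1 : ∀ n : ℕ, (0:ℝ) < 2 * π * (n:ℝ) + 2 * π / 3 := fun n => by positivity
  have hc2 : ∀ n : ℕ, (0:ℝ) < 2 * π * (n:ℝ) + 4 * π / 3 := fun n => by positivity
  have hfint : ∀ n : ℕ, IntegrableOn (Stmt4Aux.f n) (Set.Ioi 0) := by
    intro n
    show Integrable _ _
    unfold Stmt4Aux.f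
    exact ((Stmt4Aux.integrable_exp (hc1 n)).add (Stmt4Aux.integrable_exp (hc2 n))).const_mul _
  have hnorm : ∀ n : ℕ, ∫ r in Set.Ioi (0:ℝ), ‖Stmt4Aux.f n r‖
      = 1 / (2 * π * (n:ℝ) + 2 * π / 3) ^ 2 + 1 / (2 * π * (n:ℝ) + 4 * π / 3) ^ 2 := by
    intro n
    have heq : ∀ r ∈ Set.Ioi (0:ℝ), ‖Stmt4Aux.f n r‖
        = r * Real.exp (-((2 * π * (n:ℝ) + 2 * π / 3) * r))
          + r * Real.exp (-((2 * π * (n:ℝ) + 4 * π / 3) * r)) := by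
      intro r hr
      have hr0 : (0:ℝ) < r := hr
      rw [Stmt4Aux.f, Real.norm_eq_abs, abs_mul, abs_pow, abs_neg, abs_one, one_pow, one_mul,
        abs_of_nonneg (by positivity)]
    rw [setIntegral_congr_fun measurableSet_Ioi heq,
      integral_add (Stmt4Aux.integrable_exp (hc1 n)) (Stmt4Aux.integrable_exp (hc2 n)),
      Stmt4Aux.integral_exp (hc1 n), Stmt4Aux.integral_exp (hc2 n)]
  have hsumm : Summable (fun n : ℕ => 1 / (2 * π * (n:ℝ) + 2 * π / 3) ^ 2
      + 1 / (2 * π * (n:ℝ) + 4 * π / 3) ^ 2) :=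
    (Stmt4Aux.summable_aux (by nlinarith) (by nlinarith)).add
      (Stmt4Aux.summable_aux (by nlinarith) (by nlinarith))
  have hkey : (∫ r in Set.Ioi (0:ℝ), r * Real.cosh (π * r / 3) / Real.cosh (π * r))
      = ∑' n : ℕ, ∫ r in Set.Ioi (0:ℝ), Stmt4Aux.f n r := by
    rw [← MeasureTheory.integral_tsum (fun n => (hfint n).aestronglyMeasurable) (by
      have heq : ∀ n : ℕ, ∫⁻ r, ‖Stmt4Aux.f n r‖ₑ ∂(volume.restrict (Set.Ioi 0))
          = ENNReal.ofReal (1 / (2 * π * (n:ℝ) + 2 * π / 3) ^ 2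
            + 1 / (2 * π * (n:ℝ) + 4 * π / 3) ^ 2) := by
        intro n
        rw [← MeasureTheory.ofReal_integral_norm_eq_lintegral_enorm (hfint n), hnorm n]
      rw [tsum_congr heq, ← ENNReal.ofReal_tsum_of_nonneg (fun n => by positivity) hsumm]
      exact ENNReal.ofReal_ne_top)]
    exact setIntegral_congr_fun measurableSet_Ioi fun r hr => (Stmt4Aux.sum_f hr).symm
  have hval : ∀ n : ℕ, ∫ r in Set.Ioi (0:ℝ), Stmt4Aux.f n r
      = (9 / (4 * π ^ 2)) * ((-1:ℝ) ^ n * (1 / (3 * (n:ℝ) + 1) ^ 2 + 1 / (3 * (n:ℝ) + 2) ^ 2)) := by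
    intro n
    unfold Stmt4Aux.f
    rw [integral_const_mul,
      integral_add (Stmt4Aux.integrable_exp (hc1 n)) (Stmt4Aux.integrable_exp (hc2 n)),
      Stmt4Aux.integral_exp (hc1 n), Stmt4Aux.integral_exp (hc2 n)]
    have d1 : 2 * π * (n:ℝ) + 2 * π / 3 = (2 * π / 3) * (3 * (n:ℝ) + 1) := by ring
    have d2 : 2 * π * (n:ℝ) + 4 * π / 3 = (2 * π / 3) * (3 * (n:ℝ) + 2) := by ring
    rw [d1, d2, mul_pow, mul_pow]
    have h31 : (3 * (n:ℝ) + 1) ≠ 0 := by positivity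
    have h32 : (3 * (n:ℝ) + 2) ≠ 0 := by positivity
    have hπ' : π ≠ 0 := ne_of_gt hπ
    field_simp
    ring
  rw [hkey, tsum_congr hval, tsum_mul_left, Stmt4Aux.T_eq_L]
  have hπ' : π ≠ 0 := ne_of_gt hπ
  field_simp
  ring
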